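/- Let n ≥ 2 and let H₁, H₂ be proper parabolic subgroups of the braid group B_n with connected associated Coxeter graph, i.e. H_i = u_i·B_{[k_i,l_i]}·u_i⁻¹ with u_i ∈ B_n, 1 ≤ k_i < l_i ≤ n and l_i − k_i + 1 < n for i = 1, 2. Let h₁ ∈ H₁, h₂ ∈ H₂ and g ∈ B_n. If g·h₁·g⁻¹·h₂ = Δ_n^{2k} for some integer k, then k = 0 (equivalently, g·h₁·g⁻¹·h₂ = 1). -/

import Mathlib

/-- The braid relations on `n - 1` generators `σ_1, …, σ_{n-1}` (the generator
of index `i : Fin (n-1)` stands for `σ_{i+1}`): the relators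
`σ_i σ_{i+1} σ_i (σ_{i+1} σ_i σ_{i+1})⁻¹` for adjacent indices and
`σ_i σ_j (σ_j σ_i)⁻¹` for `|i - j| ≥ 2`. -/
def braidRels (n : ℕ) : Set (FreeGroup (Fin (n - 1))) :=
  {r | (∃ i j : Fin (n - 1), (i : ℕ) + 1 = (j : ℕ) ∧
          r = FreeGroup.of i * FreeGroup.of j * FreeGroup.of i *
                (FreeGroup.of j * FreeGroup.of i * FreeGroup.of j)⁻¹) ∨
       (∃ i j : Fin (n - 1), (i : ℕ) + 2 ≤ (j : ℕ) ∧
          r = FreeGroup.of i * FreeGroup.of j *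
                (FreeGroup.of j * FreeGroup.of i)⁻¹)}

/-- The braid group `B_n` on `n` strands, as the group presented by the
generators `σ_1, …, σ_{n-1}` subject to the braid relations. -/
abbrev BraidGroup (n : ℕ) : Type := PresentedGroup (braidRels n)

/-- The Artin generator `σ_i` of `B_n` (1-based index, `1 ≤ i ≤ n - 1`);
junk value `1` for indices out of range. -/
def σb (n i : ℕ) : BraidGroup n :=
  if h : 1 ≤ i ∧ i - 1 < n - 1 then PresentedGroup.of ⟨i - 1, h.2⟩ else 1

/-- The descending product `σ_a σ_{a-1} ⋯ σ_b` in `B_n` (equal to `1` when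
`b > a`). -/
def descProd (n a b : ℕ) : BraidGroup n :=
  ((List.range (a + 1 - b)).map fun t => σb n (a - t)).prod

/-- The standard parabolic subgroup `B_{[k,m]} = ⟨σ_k, σ_{k+1}, …, σ_{m-1}⟩`
of `B_n`. -/
def stdParabolic (n k m : ℕ) : Subgroup (BraidGroup n) :=
  Subgroup.closure {x | ∃ j : ℕ, k ≤ j ∧ j < m ∧ x = σb n j}

/-- The fundamental element `Δ_n = (σ_1)(σ_2 σ_1) ⋯ (σ_{n-1} σ_{n-2} ⋯ σ_1)`
of `B_n`. -/
def Δb (n : ℕ) : BraidGroup n :=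
  ((List.range (n - 1)).map fun r => descProd n (r + 1) 1).prod

/-- The braid `τ_{p,q} = (σ_p ⋯ σ_1)(σ_{p+1} ⋯ σ_2) ⋯ (σ_{p+q-1} ⋯ σ_q)`,
crossing the strands `p+1, …, p+q` over the strands `1, …, p`
(with `τ_{p,0} = 1`). -/
def τb (n p q : ℕ) : BraidGroup n :=
  ((List.range q).map fun j => descProd n (p + j) (j + 1)).prod


namespace BraidAux
open Equiv

abbrev Mat (n : ℕ) := Fin n → Fin n → ℤ

/-- basis matrix -/
def e {n : ℕ} (p q : Fin n) : Mat n := fun a b => if a = p ∧ b = q then 1 else 0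

def permMat {n : ℕ} (π : Perm (Fin n)) : Mat n ≃+ Mat n where
  toFun M a b := M (π⁻¹ a) (π⁻¹ b)
  invFun M a b := M (π a) (π b)
  left_inv M := by funext a b; simp
  right_inv M := by funext a b; simp
  map_add' M N := rfl

def act (n : ℕ) : Perm (Fin n) →* MulAut (Multiplicative (Mat n)) where
  toFun π := AddEquiv.toMultiplicative (permMat π)
  map_one' := by ext M; rfl
  map_mul' π ρ := by ext M; rfl

abbrev G (n : ℕ) := SemidirectProduct (Multiplicative (Mat n)) (Perm (Fin n)) (act n)

def addAct {n : ℕ} (π : Perm (Fin n)) (M : Mat n) : Mat n := fun a b => M (π⁻¹ a) (π⁻¹ b)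

lemma addAct_e {n : ℕ} (π : Perm (Fin n)) (p q : Fin n) :
    addAct π (e p q) = e (π p) (π q) := by
  funext a b
  unfold addAct e
  congr 1
  simp [Equiv.Perm.inv_eq_iff_eq, Equiv.symm_apply_eq]

lemma addAct_add {n : ℕ} (π : Perm (Fin n)) (M N : Mat n) :
    addAct π (M + N) = addAct π M + addAct π N := rfl

def vOf {n : ℕ} (x : G n) : Mat n := Multiplicative.toAdd x.left
def pOf {n : ℕ} (x : G n) : Perm (Fin n) := x.right

lemma vOf_mul {n : ℕ} (x y : G n) : vOf (x * y) = vOf x + addAct (pOf x) (vOf y) := rfl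
lemma vOf_mul_apply {n : ℕ} (x y : G n) (a b : Fin n) :
    vOf (x * y) a b = vOf x a b + vOf y ((pOf x)⁻¹ a) ((pOf x)⁻¹ b) := rfl
lemma vOf_inv_apply {n : ℕ} (x : G n) (a b : Fin n) :
    vOf x⁻¹ a b = - vOf x (pOf x a) (pOf x b) := rfl
lemma pOf_mul {n : ℕ} (x y : G n) : pOf (x * y) = pOf x * pOf y := rfl
lemma pOf_inv {n : ℕ} (x : G n) : pOf x⁻¹ = (pOf x)⁻¹ := rfl

lemma perm_inv_apply_self {α : Type*} (f : Perm α) (x : α) : f⁻¹ (f x) = x :=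
  Equiv.symm_apply_apply _ _

lemma Gext {n : ℕ} {x y : G n} (h1 : vOf x = vOf y) (h2 : pOf x = pOf y) : x = y := by
  cases x; cases y
  simp only [vOf, pOf] at h1 h2
  congr 1
end BraidAux

namespace BraidAux
open Equiv

def pg (n i : ℕ) : Perm (Fin n) :=
  if h : i + 1 < n then Equiv.swap ⟨i, by omega⟩ ⟨i + 1, h⟩ else 1

def vg (n i : ℕ) : Mat n :=
  if h : i + 1 < n then e ⟨i, by omega⟩ ⟨i + 1, h⟩ else 0

def gen (n i : ℕ) : G n := ⟨Multiplicative.ofAdd (vg n i), pg n i⟩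

lemma vOf_gen {n : ℕ} (i : ℕ) : vOf (gen n i) = vg n i := rfl
lemma pOf_gen {n : ℕ} (i : ℕ) : pOf (gen n i) = pg n i := rfl


lemma mk_ne {n a b : ℕ} (ha : a < n) (hb : b < n) (h : a ≠ b) :
    (⟨a, ha⟩ : Fin n) ≠ ⟨b, hb⟩ := by
  simp only [ne_eq, Fin.mk.injEq]
  exact h

lemma gen_braid {n : ℕ} (i j : ℕ) (hij : i + 1 = j) (hjn : j + 1 < n) :
    gen n i * gen n j * gen n i = gen n j * gen n i * gen n j := by
  subst hij
  have hA : i < n := by omega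
  have hB : i + 1 < n := by omega
  have hC : i + 2 < n := by omega
  set A : Fin n := ⟨i, hA⟩ with hAdef
  set B : Fin n := ⟨i + 1, hB⟩ with hBdef
  set C : Fin n := ⟨i + 2, hC⟩ with hCdef
  have hAB : A ≠ B := mk_ne _ _ (by omega)
  have hAC : A ≠ C := mk_ne _ _ (by omega)
  have hBC : B ≠ C := mk_ne _ _ (by omega)
  have hCA : C ≠ A := hAC.symm
  have hCB : C ≠ B := hBC.symm
  have hBA : B ≠ A := hAB.symm
  have hvi : vg n i = e A B := by rw [vg, dif_pos hB]
  have hvj : vg n (i + 1) = e B C := by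
    rw [vg, dif_pos (show i + 1 + 1 < n by omega)]
  have hpi : pg n i = Equiv.swap A B := by rw [pg, dif_pos hB]
  have hpj : pg n (i + 1) = Equiv.swap B C := by
    rw [pg, dif_pos (show i + 1 + 1 < n by omega)]
  have eCfix : Equiv.swap A B C = C := swap_apply_of_ne_of_ne hCA hCB
  have eAfix : Equiv.swap B C A = A := swap_apply_of_ne_of_ne hAB hAC
  apply Gext
  · simp only [vOf_mul, pOf_mul, vOf_gen, pOf_gen, hvi, hvj, hpi, hpj, addAct_e,
      Equiv.Perm.mul_apply, swap_apply_left, swap_apply_right, eCfix, eAfix]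
    abel
  · simp only [pOf_mul, pOf_gen, hpi, hpj]
    have h1 : Equiv.swap B C * Equiv.swap A B * Equiv.swap B C = Equiv.swap C A :=
      swap_mul_swap_mul_swap hAB hAC
    have h2 : Equiv.swap A B * Equiv.swap B C * Equiv.swap A B = Equiv.swap A C := by
      have h := swap_mul_swap_mul_swap hCB hCA
      rwa [swap_comm B A, swap_comm C B] at h
    rw [h1, h2, swap_comm]

lemma gen_comm {n : ℕ} (i j : ℕ) (hij : i + 2 ≤ j) (hjn : j + 1 < n) :
    gen n i * gen n j = gen n j * gen n i := by
  have hA : i < n := by omega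
  have hB : i + 1 < n := by omega
  have hC : j < n := by omega
  set A : Fin n := ⟨i, hA⟩
  set B : Fin n := ⟨i + 1, hB⟩
  set C : Fin n := ⟨j, hC⟩
  set D : Fin n := ⟨j + 1, hjn⟩
  have hvi : vg n i = e A B := by rw [vg, dif_pos hB]
  have hvj : vg n j = e C D := by rw [vg, dif_pos hjn]
  have hpi : pg n i = Equiv.swap A B := by rw [pg, dif_pos hB]
  have hpj : pg n j = Equiv.swap C D := by rw [pg, dif_pos hjn]
  have fixC : Equiv.swap A B C = C :=
    swap_apply_of_ne_of_ne (mk_ne _ _ (by omega)) (mk_ne _ _ (by omega))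
  have fixD : Equiv.swap A B D = D :=
    swap_apply_of_ne_of_ne (mk_ne _ _ (by omega)) (mk_ne _ _ (by omega))
  have fixA : Equiv.swap C D A = A :=
    swap_apply_of_ne_of_ne (mk_ne _ _ (by omega)) (mk_ne _ _ (by omega))
  have fixB : Equiv.swap C D B = B :=
    swap_apply_of_ne_of_ne (mk_ne _ _ (by omega)) (mk_ne _ _ (by omega))
  apply Gext
  · simp only [vOf_mul, pOf_mul, vOf_gen, pOf_gen, hvi, hvj, hpi, hpj, addAct_e,
      fixA, fixB, fixC, fixD]
    abel
  · simp only [pOf_mul, pOf_gen, hpi, hpj]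
    have h := (swap_apply_apply (Equiv.swap C D) A B).symm
    rw [fixA, fixB, mul_inv_eq_iff_eq_mul] at h
    exact h.symm

end BraidAux


namespace BraidAux
open Equiv

lemma pg_coe {n : ℕ} (i : ℕ) (a : Fin n) :
    ((pg n i a : Fin n) : ℕ) = if i + 1 < n ∧ (a : ℕ) = i then i + 1
      else if i + 1 < n ∧ (a : ℕ) = i + 1 then i else a := by
  unfold pg
  split_ifs with h h1 h2 h3 h4
  · rw [show a = (⟨i, by omega⟩ : Fin n) from Fin.ext h1.2, Equiv.swap_apply_left]
  · rw [show a = (⟨i+1, by omega⟩ : Fin n) from Fin.ext h2.2, Equiv.swap_apply_right]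
  · rw [Equiv.swap_apply_of_ne_of_ne] <;> simp [Fin.ext_iff] <;> tauto
  · tauto
  · tauto
  · rfl

lemma pg_inv {n : ℕ} (i : ℕ) : (pg n i)⁻¹ = pg n i := by
  unfold pg; split_ifs <;> simp

lemma vg_coe {n : ℕ} (i : ℕ) (a b : Fin n) :
    vg n i a b = if (a : ℕ) = i ∧ (b : ℕ) = i + 1 then 1 else 0 := by
  unfold vg
  split_ifs with h h1 h2
  · unfold e
    rw [if_pos]
    constructor <;> [exact Fin.ext h1.1; exact Fin.ext h1.2]
  · unfold e
    rw [if_neg]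
    intro hc
    exact h1 ⟨by rw [hc.1], by rw [hc.2]⟩
  · exfalso; have := b.isLt; omega
  · rfl

lemma relsat (n : ℕ) : ∀ r ∈ braidRels n,
    FreeGroup.lift (fun i : Fin (n - 1) => gen n (i : ℕ)) r = 1 := by
  rintro r (⟨i, j, hij, rfl⟩ | ⟨i, j, hij, rfl⟩)
  · have hjn : (j : ℕ) + 1 < n := by have := j.isLt; omega
    simp only [map_mul, map_inv, FreeGroup.lift_apply_of]
    rw [mul_inv_eq_one]
    exact gen_braid (i : ℕ) (j : ℕ) hij hjn
  · have hjn : (j : ℕ) + 1 < n := by have := j.isLt; omega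
    simp only [map_mul, map_inv, FreeGroup.lift_apply_of]
    rw [mul_inv_eq_one]
    exact gen_comm (i : ℕ) (j : ℕ) hij hjn

def Φ (n : ℕ) : BraidGroup n →* G n := PresentedGroup.toGroup (relsat n)

lemma Phi_of {n : ℕ} (i : Fin (n - 1)) : Φ n (PresentedGroup.of i) = gen n (i : ℕ) :=
  PresentedGroup.toGroup.of (relsat n)

lemma gen_eq_one {n i : ℕ} (h : ¬ i + 1 < n) : gen n i = 1 := by
  apply Gext
  · show vg n i = vOf (1 : G n)
    unfold vg
    rw [dif_neg h]
    rfl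
  · show pg n i = 1
    unfold pg
    rw [dif_neg h]

lemma Phi_σb {n i : ℕ} (h1 : 1 ≤ i) : Φ n (σb n i) = gen n (i - 1) := by
  unfold σb
  split_ifs with h
  · exact Phi_of _
  · rw [map_one, gen_eq_one]
    omega

def PB {n : ℕ} (x : BraidGroup n) : Perm (Fin n) := pOf (Φ n x)
def VB {n : ℕ} (x : BraidGroup n) : Mat n := vOf (Φ n x)

lemma PB_mul {n : ℕ} (x y : BraidGroup n) : PB (x * y) = PB x * PB y := by
  unfold PB; rw [map_mul]; rfl

lemma PB_inv {n : ℕ} (x : BraidGroup n) : PB x⁻¹ = (PB x)⁻¹ := by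
  unfold PB; rw [map_inv]; rfl

lemma VB_mul {n : ℕ} (x y : BraidGroup n) (a b : Fin n) :
    VB (x * y) a b = VB x a b + VB y ((PB x)⁻¹ a) ((PB x)⁻¹ b) := by
  unfold VB PB; rw [map_mul]; rfl

lemma VB_inv {n : ℕ} (x : BraidGroup n) (a b : Fin n) :
    VB x⁻¹ a b = - VB x (PB x a) (PB x b) := by
  unfold VB PB; rw [map_inv]; rfl

lemma VB_conj {n : ℕ} (c x : BraidGroup n) (a b : Fin n) :
    VB (c * x * c⁻¹) a b = VB c a b + VB x ((PB c)⁻¹ a) ((PB c)⁻¹ b)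
      - VB c (PB c ((PB x)⁻¹ ((PB c)⁻¹ a))) (PB c ((PB x)⁻¹ ((PB c)⁻¹ b))) := by
  rw [VB_mul, VB_mul, VB_inv, PB_mul, mul_inv_rev]
  simp only [Equiv.Perm.mul_apply]
  ring

lemma PB_conj {n : ℕ} (c x : BraidGroup n) :
    PB (c * x * c⁻¹) = PB c * PB x * (PB c)⁻¹ := by
  rw [PB_mul, PB_mul, PB_inv]

end BraidAux


namespace BraidAux
open Equiv

def cyc (n a : ℕ) : Perm (Fin n) where
  toFun x := if h : a < n ∧ (x : ℕ) = 0 then ⟨a, h.1⟩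
    else if h2 : a < n ∧ (x : ℕ) ≤ a then ⟨(x : ℕ) - 1, by have := x.isLt; omega⟩
    else x
  invFun x := if h : a < n ∧ (x : ℕ) = a then ⟨0, by omega⟩
    else if h2 : a < n ∧ (x : ℕ) < a then ⟨(x : ℕ) + 1, by omega⟩
    else x
  left_inv := by
    intro x
    dsimp only
    split_ifs <;> first
      | rfl
      | (apply Fin.val_injective; simp_all [Fin.ext_iff] <;> omega)
      | (exfalso; simp_all [Fin.ext_iff] <;> omega)
  right_inv := by
    intro x
    dsimp only
    split_ifs <;> first
      | rfl
      | (apply Fin.val_injective; simp_all [Fin.ext_iff] <;> omega)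
      | (exfalso; simp_all [Fin.ext_iff] <;> omega)

lemma cyc_coe {n : ℕ} (a : ℕ) (x : Fin n) :
    ((cyc n a x : Fin n) : ℕ) = if a < n ∧ (x : ℕ) = 0 then a
      else if a < n ∧ (x : ℕ) ≤ a then (x : ℕ) - 1 else x := by
  show ((Equiv.toFun _ x : Fin n) : ℕ) = _
  unfold cyc
  dsimp only
  split_ifs <;> rfl

def rev (n m : ℕ) : Perm (Fin n) where
  toFun x := if h : m < n ∧ (x : ℕ) ≤ m then ⟨m - (x : ℕ), by omega⟩ else x
  invFun x := if h : m < n ∧ (x : ℕ) ≤ m then ⟨m - (x : ℕ), by omega⟩ else x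
  left_inv := by
    intro x
    dsimp only
    split_ifs <;> first
      | rfl
      | (apply Fin.val_injective; simp_all [Fin.ext_iff] <;> omega)
      | (exfalso; simp_all [Fin.ext_iff] <;> omega)
  right_inv := by
    intro x
    dsimp only
    split_ifs <;> first
      | rfl
      | (apply Fin.val_injective; simp_all [Fin.ext_iff] <;> omega)
      | (exfalso; simp_all [Fin.ext_iff] <;> omega)

lemma rev_coe {n : ℕ} (m : ℕ) (x : Fin n) :
    ((rev n m x : Fin n) : ℕ) = if m < n ∧ (x : ℕ) ≤ m then m - (x : ℕ) else x := by
  show ((Equiv.toFun _ x : Fin n) : ℕ) = _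
  unfold rev
  dsimp only
  split_ifs <;> rfl

lemma rev_inv {n : ℕ} (m : ℕ) : (rev n m)⁻¹ = rev n m := rfl

end BraidAux

namespace BraidAux
open Equiv

def vD (n a : ℕ) : Mat n := fun x y => if (x : ℕ) < a ∧ (y : ℕ) = a then 1 else 0
def vT (n m : ℕ) : Mat n := fun x y => if (x : ℕ) < (y : ℕ) ∧ (y : ℕ) ≤ m then 1 else 0

lemma vOf_mk {n : ℕ} (M : Mat n) (p : Perm (Fin n)) :
    vOf (⟨Multiplicative.ofAdd M, p⟩ : G n) = M := rfl
lemma pOf_mk {n : ℕ} (M : Mat n) (p : Perm (Fin n)) :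
    pOf (⟨Multiplicative.ofAdd M, p⟩ : G n) = p := rfl
lemma vOf_one {n : ℕ} : vOf (1 : G n) = 0 := rfl
lemma pOf_one {n : ℕ} : pOf (1 : G n) = 1 := rfl
lemma addAct_apply {n : ℕ} (π : Perm (Fin n)) (M : Mat n) (a b : Fin n) :
    addAct π M a b = M (π⁻¹ a) (π⁻¹ b) := rfl
lemma vD_apply {n a : ℕ} (x y : Fin n) :
    vD n a x y = if (x : ℕ) < a ∧ (y : ℕ) = a then 1 else 0 := rfl
lemma vT_apply {n m : ℕ} (x y : Fin n) :
    vT n m x y = if (x : ℕ) < (y : ℕ) ∧ (y : ℕ) ≤ m then 1 else 0 := rfl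

lemma descProd_zero (n : ℕ) : descProd n 0 1 = 1 := rfl

lemma descProd_succ (n a : ℕ) : descProd n (a + 1) 1 = σb n (a + 1) * descProd n a 1 := by
  unfold descProd
  rw [Nat.add_sub_cancel, Nat.add_sub_cancel, List.range_succ_eq_map, List.map_cons,
    List.map_map, List.prod_cons, Nat.sub_zero]
  have : List.map ((fun t => σb n (a + 1 - t)) ∘ Nat.succ) (List.range a)
      = List.map (fun t => σb n (a - t)) (List.range a) := by
    apply List.map_congr_left
    intro t _
    simp only [Function.comp_apply]
    congr 1
    omega
  rw [this]

set_option maxHeartbeats 1000000 in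
lemma Phi_desc {n : ℕ} (a : ℕ) (h1 : 1 ≤ a) (h2 : a < n) :
    Φ n (descProd n a 1) = ⟨Multiplicative.ofAdd (vD n a), cyc n a⟩ := by
  induction a with
  | zero => omega
  | succ a ih =>
    rw [descProd_succ, map_mul, Phi_σb (by omega)]
    have hred : a + 1 - 1 = a := by omega
    rw [hred]
    have han : a + 1 < n := h2
    have han' : a < n := by omega
    rcases Nat.eq_zero_or_pos a with rfl | ha
    · rw [descProd_zero, map_one, mul_one]
      apply Gext
      · funext x y
        simp only [vOf_gen, vOf_mk, vg_coe, vD_apply]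
        split_ifs <;> omega
      · simp only [pOf_gen, pOf_mk]
        apply Equiv.ext; intro z
        apply Fin.val_injective
        rw [pg_coe, cyc_coe]
        split_ifs <;> omega
    · rw [ih ha (by omega)]
      apply Gext
      · funext x y
        simp only [vOf_mul, Pi.add_apply, vOf_gen, pOf_gen, addAct_apply, pg_inv, vOf_mk,
          vg_coe, vD_apply, pg_coe, han, han', true_and]
        split_ifs <;> omega
      · simp only [pOf_mul, pOf_gen, pOf_mk]
        apply Equiv.ext; intro z
        apply Fin.val_injective
        simp only [Equiv.Perm.mul_apply, pg_coe, cyc_coe, han, han', true_and]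
        split_ifs <;> omega

def parΔ (n m : ℕ) : BraidGroup n := ((List.range m).map fun r => descProd n (r + 1) 1).prod

lemma parΔ_succ (n m : ℕ) : parΔ n (m + 1) = parΔ n m * descProd n (m + 1) 1 := by
  unfold parΔ
  rw [List.range_succ, List.map_append, List.prod_append, List.map_singleton,
    List.prod_singleton]

lemma Δb_eq (n : ℕ) : Δb n = parΔ n (n - 1) := rfl

set_option maxHeartbeats 1000000 in
lemma Phi_parΔ {n : ℕ} (m : ℕ) (hm : m < n) :
    Φ n (parΔ n m) = ⟨Multiplicative.ofAdd (vT n m), rev n m⟩ := by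
  induction m with
  | zero =>
    show Φ n 1 = _
    rw [map_one]
    symm
    apply Gext
    · funext x y
      simp only [vOf_mk, vOf_one, vT_apply, Pi.zero_apply]
      rw [if_neg]
      omega
    · simp only [pOf_mk, pOf_one]
      apply Equiv.ext; intro z
      apply Fin.val_injective
      simp only [Equiv.Perm.one_apply, rev_coe]
      split_ifs <;> omega
  | succ m ih =>
    have hm' : m < n := by omega
    rw [parΔ_succ, map_mul, ih hm', Phi_desc (m + 1) (by omega) hm]
    apply Gext
    · funext x y
      have hx := x.isLt
      have hy := y.isLt
      simp only [vOf_mul, Pi.add_apply, vOf_mk, pOf_mk, addAct_apply, rev_inv,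
        vT_apply, vD_apply, rev_coe, hm', true_and]
      split_ifs <;> omega
    · simp only [pOf_mul, pOf_mk]
      apply Equiv.ext; intro z
      apply Fin.val_injective
      have hz := z.isLt
      simp only [Equiv.Perm.mul_apply, rev_coe, cyc_coe, hm, hm', true_and]
      split_ifs <;> omega

end BraidAux

namespace BraidAux
open Equiv

lemma rev_mul_self {n m : ℕ} : rev n m * rev n m = 1 := by
  have h : rev n m * (rev n m)⁻¹ = 1 := mul_inv_cancel _
  rwa [rev_inv] at h

set_option maxHeartbeats 1000000 in
lemma Phi_Δsq {n : ℕ} (hn : 2 ≤ n) :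
    Φ n (Δb n * Δb n) = SemidirectProduct.inl
      (Multiplicative.ofAdd (fun x y : Fin n => if (x : ℕ) = (y : ℕ) then 0 else (1 : ℤ))) := by
  have hm : n - 1 < n := by omega
  rw [map_mul, Δb_eq, Phi_parΔ (n - 1) hm]
  apply Gext
  · funext x y
    have hx := x.isLt
    have hy := y.isLt
    have hl : vOf (SemidirectProduct.inl
        (φ := act n) (Multiplicative.ofAdd (fun x y : Fin n =>
          if (x : ℕ) = (y : ℕ) then 0 else (1 : ℤ)))) x y
        = if (x : ℕ) = (y : ℕ) then 0 else (1 : ℤ) := rfl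
    rw [hl]
    simp only [vOf_mul, Pi.add_apply, vOf_mk, pOf_mk, addAct_apply, rev_inv,
      vT_apply, rev_coe, hm, true_and]
    split_ifs <;> omega
  · have hr : pOf (SemidirectProduct.inl
        (φ := act n) (Multiplicative.ofAdd (fun x y : Fin n =>
          if (x : ℕ) = (y : ℕ) then 0 else (1 : ℤ)))) = 1 := rfl
    rw [hr]
    simp only [pOf_mul, pOf_mk]
    exact rev_mul_self

lemma Phi_Δpow {n : ℕ} (hn : 2 ≤ n) (k : ℤ) :
    Φ n (Δb n ^ (2 * k)) = SemidirectProduct.inl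
      (Multiplicative.ofAdd (fun x y : Fin n => if (x : ℕ) = (y : ℕ) then 0 else k)) := by
  have h1 : Δb n ^ (2 * k) = (Δb n * Δb n) ^ k := by
    rw [zpow_mul]
    norm_num [zpow_two, pow_two]
  rw [h1, map_zpow, Phi_Δsq hn, ← map_zpow]
  congr 1
  apply Multiplicative.toAdd.injective
  funext x y
  rw [toAdd_zpow]
  show (k • Multiplicative.toAdd (Multiplicative.ofAdd
    (fun x y : Fin n => if (x : ℕ) = (y : ℕ) then 0 else (1:ℤ)))) x y = _
  show (k • fun x y : Fin n => if (x : ℕ) = (y : ℕ) then 0 else (1:ℤ)) x y = _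
  simp only [Pi.smul_apply, smul_eq_mul]
  show _ = (if (x : ℕ) = (y : ℕ) then 0 else k)
  split_ifs <;> ring

lemma PB_Δpow {n : ℕ} (hn : 2 ≤ n) (k : ℤ) : PB (Δb n ^ (2 * k)) = 1 := by
  unfold PB
  rw [Phi_Δpow hn]
  rfl

lemma VB_Δpow {n : ℕ} (hn : 2 ≤ n) (k : ℤ) (x y : Fin n) :
    VB (Δb n ^ (2 * k)) x y = if (x : ℕ) = (y : ℕ) then 0 else k := by
  unfold VB
  rw [Phi_Δpow hn]
  rfl

end BraidAux

namespace BraidAux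
open Equiv

/-- "outside the block [K-1, M-1] (0-based)" -/
def OutB (K M : ℕ) {n : ℕ} (a : Fin n) : Prop := (a : ℕ) + 1 < K ∨ M ≤ (a : ℕ)

lemma parab_support {n K M : ℕ} (hK : 1 ≤ K) {x : BraidGroup n}
    (hx : x ∈ stdParabolic n K M) :
    (∀ a : Fin n, OutB K M a → PB x a = a) ∧
    (∀ a b : Fin n, (OutB K M a ∨ OutB K M b) → VB x a b = 0) := by
  induction hx using Subgroup.closure_induction with
  | mem y hy =>
    obtain ⟨j, hj1, hj2, rfl⟩ := hy
    have hPB : PB (σb n j) = pg n (j - 1) := by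
      unfold PB
      rw [Phi_σb (by omega)]
      rfl
    have hVB : VB (σb n j) = vg n (j - 1) := by
      unfold VB
      rw [Phi_σb (by omega)]
      rfl
    constructor
    · intro a ha
      rw [hPB]
      apply Fin.val_injective
      rw [pg_coe]
      unfold OutB at ha
      split_ifs <;> omega
    · intro a b hab
      rw [hVB, vg_coe, if_neg]
      unfold OutB at hab
      omega
  | one =>
    constructor
    · intro a _
      show pOf (Φ n 1) a = a
      rw [map_one]
      rfl
    · intro a b _
      show vOf (Φ n 1) a b = 0
      rw [map_one]
      rfl
  | mul y z hy hz ihy ihz =>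
    obtain ⟨py, vy⟩ := ihy
    obtain ⟨pz, vz⟩ := ihz
    have pyinv : ∀ a : Fin n, OutB K M a → (PB y)⁻¹ a = a := by
      intro a ha
      nth_rewrite 1 [← py a ha]
      exact perm_inv_apply_self _ _
    constructor
    · intro a ha
      rw [PB_mul, Equiv.Perm.mul_apply, pz a ha, py a ha]
    · intro a b hab
      rw [VB_mul]
      rcases hab with ha | hb
      · rw [pyinv a ha, vy a _ (Or.inl ha), vz a _ (Or.inl ha), add_zero]
      · rw [pyinv b hb, vy _ b (Or.inr hb), vz _ b (Or.inr hb), add_zero]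
  | inv y hy ihy =>
    obtain ⟨py, vy⟩ := ihy
    constructor
    · intro a ha
      rw [PB_inv]
      nth_rewrite 1 [← py a ha]
      exact perm_inv_apply_self _ _
    · intro a b hab
      rw [VB_inv]
      rcases hab with ha | hb
      · rw [py a ha, vy a _ (Or.inl ha), neg_zero]
      · rw [py b hb, vy _ b (Or.inr hb), neg_zero]

end BraidAux

namespace BraidAux
open Equiv

lemma perm_fix_inv {α : Type*} (π : Equiv.Perm α) {a : α} (h : π a = a) : π⁻¹ a = a := by
  nth_rewrite 1 [← h]
  exact perm_inv_apply_self _ _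

set_option maxHeartbeats 1000000 in
lemma key {n : ℕ} (hn : 2 ≤ n) (c u x₁ x₂ : BraidGroup n) (k : ℤ)
    (i₁ i₂ : Fin n)
    (f1 : PB x₁ i₁ = i₁) (v1 : ∀ q, VB x₁ i₁ q = 0)
    (f2 : PB x₂ i₂ = i₂) (v2l : ∀ q, VB x₂ i₂ q = 0) (v2r : ∀ p, VB x₂ p i₂ = 0)
    (heq : (c * x₁ * c⁻¹) * (u * x₂ * u⁻¹) = Δb n ^ (2 * k)) : k = 0 := by
  have hπ : PB (c * x₁ * c⁻¹) * PB (u * x₂ * u⁻¹) = 1 := by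
    rw [← PB_mul, heq, PB_Δpow hn]
  have hπ2 : PB (u * x₂ * u⁻¹) = (PB (c * x₁ * c⁻¹))⁻¹ :=
    (inv_eq_of_mul_eq_one_right hπ).symm
  have ha : PB (c * x₁ * c⁻¹) (PB c i₁) = PB c i₁ := by
    rw [PB_conj]
    simp only [Equiv.Perm.mul_apply, perm_inv_apply_self]
    rw [f1]
  have hb2 : PB (u * x₂ * u⁻¹) (PB u i₂) = PB u i₂ := by
    rw [PB_conj]
    simp only [Equiv.Perm.mul_apply, perm_inv_apply_self]
    rw [f2]
  have hb : PB (c * x₁ * c⁻¹) (PB u i₂) = PB u i₂ := by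
    rw [show PB (c * x₁ * c⁻¹) = (PB (u * x₂ * u⁻¹))⁻¹ by rw [hπ2, inv_inv]]
    exact perm_fix_inv _ hb2
  have ha2 : PB (u * x₂ * u⁻¹) (PB c i₁) = PB c i₁ := by
    rw [hπ2]
    exact perm_fix_inv _ ha
  have ha' : (PB (c * x₁ * c⁻¹))⁻¹ (PB c i₁) = PB c i₁ := perm_fix_inv _ ha
  have hb' : (PB (c * x₁ * c⁻¹))⁻¹ (PB u i₂) = PB u i₂ := perm_fix_inv _ hb
  have ha2' : (PB (u * x₂ * u⁻¹))⁻¹ (PB c i₁) = PB c i₁ := perm_fix_inv _ ha2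
  have hb2' : (PB (u * x₂ * u⁻¹))⁻¹ (PB u i₂) = PB u i₂ := perm_fix_inv _ hb2
  have hcomp1 : ∀ y : Fin n, PB c ((PB x₁)⁻¹ ((PB c)⁻¹ y)) = (PB (c * x₁ * c⁻¹))⁻¹ y := by
    intro y
    rw [PB_conj, mul_inv_rev, mul_inv_rev, inv_inv]
    simp only [Equiv.Perm.mul_apply]
  have hcomp2 : ∀ y : Fin n, PB u ((PB x₂)⁻¹ ((PB u)⁻¹ y)) = (PB (u * x₂ * u⁻¹))⁻¹ y := by
    intro y
    rw [PB_conj, mul_inv_rev, mul_inv_rev, inv_inv]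
    simp only [Equiv.Perm.mul_apply]
  have hVX : ∀ y : Fin n, VB (c * x₁ * c⁻¹) (PB c i₁) y
      = VB c (PB c i₁) y - VB c (PB c i₁) ((PB (c * x₁ * c⁻¹))⁻¹ y) := by
    intro y
    rw [VB_conj]
    simp only [hcomp1]
    rw [ha', perm_inv_apply_self, v1, add_zero]
  have hVY : ∀ p q : Fin n, VB (u * x₂ * u⁻¹) p q
      = VB u p q + VB x₂ ((PB u)⁻¹ p) ((PB u)⁻¹ q)
        - VB u ((PB (u * x₂ * u⁻¹))⁻¹ p) ((PB (u * x₂ * u⁻¹))⁻¹ q) := by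
    intro p q
    rw [VB_conj]
    simp only [hcomp2]
  have hVeq : ∀ p q : Fin n, VB ((c * x₁ * c⁻¹) * (u * x₂ * u⁻¹)) p q
      = if (p : ℕ) = (q : ℕ) then 0 else k := by
    intro p q
    rw [heq, VB_Δpow hn]
  by_cases hab : PB c i₁ = PB u i₂
  · -- row-sum case
    have h1 : ∀ y : Fin n, VB ((c * x₁ * c⁻¹) * (u * x₂ * u⁻¹)) (PB c i₁) y
        = (VB c (PB c i₁) y - VB c (PB c i₁) ((PB (c * x₁ * c⁻¹))⁻¹ y))
          + (VB u (PB c i₁) ((PB (c * x₁ * c⁻¹))⁻¹ y)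
             - VB u (PB c i₁) ((PB (u * x₂ * u⁻¹))⁻¹ ((PB (c * x₁ * c⁻¹))⁻¹ y))) := by
      intro y
      rw [VB_mul, ha', hVX, hVY]
      rw [hab, perm_inv_apply_self, v2l, add_zero, ← hab, ha2']
    have hsplit : ∀ y : Fin n, (if ((PB c i₁ : Fin n) : ℕ) = (y : ℕ) then (0:ℤ) else k)
        = k - (if y = PB c i₁ then k else 0) := by
      intro y
      by_cases hy : y = PB c i₁
      · subst hy
        simp
      · rw [if_neg, if_neg hy, sub_zero]
        intro hv
        exact hy (Fin.val_injective hv.symm)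
    have hsum : ∑ y : Fin n, VB ((c * x₁ * c⁻¹) * (u * x₂ * u⁻¹)) (PB c i₁) y
        = ∑ y : Fin n, (k - (if y = PB c i₁ then k else 0)) := by
      apply Finset.sum_congr rfl
      intro y _
      rw [hVeq, hsplit]
    have hLHS : ∑ y : Fin n, VB ((c * x₁ * c⁻¹) * (u * x₂ * u⁻¹)) (PB c i₁) y = 0 := by
      rw [Finset.sum_congr rfl (fun y _ => h1 y), Finset.sum_add_distrib,
        Finset.sum_sub_distrib, Finset.sum_sub_distrib]
      rw [Equiv.sum_comp (PB (c * x₁ * c⁻¹))⁻¹ (fun z => VB c (PB c i₁) z)]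
      rw [show (∑ y : Fin n, VB u (PB c i₁) ((PB (u * x₂ * u⁻¹))⁻¹ ((PB (c * x₁ * c⁻¹))⁻¹ y)))
          = ∑ y : Fin n, VB u (PB c i₁) ((PB (u * x₂ * u⁻¹))⁻¹ y) from
        Equiv.sum_comp (PB (c * x₁ * c⁻¹))⁻¹ (fun z => VB u (PB c i₁) ((PB (u * x₂ * u⁻¹))⁻¹ z))]
      rw [Equiv.sum_comp (PB (u * x₂ * u⁻¹))⁻¹ (fun z => VB u (PB c i₁) z)]
      rw [Equiv.sum_comp (PB (c * x₁ * c⁻¹))⁻¹ (fun z => VB u (PB c i₁) z)]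
      ring
    have hRHS : ∑ y : Fin n, (k - (if y = PB c i₁ then k else 0)) = (n : ℤ) * k - k := by
      rw [Finset.sum_sub_distrib, Finset.sum_const, Finset.sum_ite_eq' Finset.univ (PB c i₁)
        (fun _ => k)]
      simp [Finset.card_univ, mul_comm]
    rw [hLHS] at hsum
    rw [hRHS] at hsum
    have hne : ((n : ℤ) - 1) ≠ 0 := by
      have : (2 : ℤ) ≤ (n : ℤ) := by exact_mod_cast hn
      omega
    have : ((n : ℤ) - 1) * k = 0 := by linarith
    rcases mul_eq_zero.mp this with h | h
    · exact absurd h hne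
    · exact h
  · -- distinct points case
    have h0 := hVeq (PB c i₁) (PB u i₂)
    rw [if_neg (fun hv => hab (Fin.val_injective hv))] at h0
    rw [VB_mul, ha', hb', hVX, hb'] at h0
    rw [hVY] at h0
    rw [perm_inv_apply_self, v2r, add_zero, ha2', hb2'] at h0
    linarith [h0]

end BraidAux

/-- Lemma 4: let `H₁ = u₁ B_{[k₁,l₁]} u₁⁻¹` and
`H₂ = u₂ B_{[k₂,l₂]} u₂⁻¹` be proper parabolic subgroups of `B_n` with
connected associated Coxeter graph (properness: `l_i - k_i + 1 < n`). If
`h₁ ∈ H₁`, `h₂ ∈ H₂`, `g ∈ B_n` and `g h₁ g⁻¹ h₂ = Δ_n^{2k}` for some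
`k : ℤ`, then `k = 0`. -/
theorem central_power_from_proper_parabolics (n : ℕ) (hn : 2 ≤ n)
    (k₁ l₁ k₂ l₂ : ℕ)
    (hk₁ : 1 ≤ k₁) (hkl₁ : k₁ < l₁) (hl₁ : l₁ ≤ n) (hp₁ : l₁ - k₁ + 1 < n)
    (hk₂ : 1 ≤ k₂) (hkl₂ : k₂ < l₂) (hl₂ : l₂ ≤ n) (hp₂ : l₂ - k₂ + 1 < n)
    (u₁ u₂ : BraidGroup n) (H₁ H₂ : Subgroup (BraidGroup n))
    (hH₁ : H₁ = (stdParabolic n k₁ l₁).map (MulAut.conj u₁).toMonoidHom)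
    (hH₂ : H₂ = (stdParabolic n k₂ l₂).map (MulAut.conj u₂).toMonoidHom)
    (h₁ h₂ g : BraidGroup n) (hh₁ : h₁ ∈ H₁) (hh₂ : h₂ ∈ H₂)
    (k : ℤ) (heq : g * h₁ * g⁻¹ * h₂ = Δb n ^ (2 * k)) :
    k = 0 := by
  subst hH₁ hH₂
  rw [Subgroup.mem_map] at hh₁ hh₂
  obtain ⟨x₁, hx₁mem, hx₁⟩ := hh₁
  obtain ⟨x₂, hx₂mem, hx₂⟩ := hh₂
  simp only [MulEquiv.coe_toMonoidHom, MulAut.conj_apply] at hx₁ hx₂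
  have heq' : (g * u₁ * x₁ * (g * u₁)⁻¹) * (u₂ * x₂ * u₂⁻¹) = Δb n ^ (2 * k) := by
    rw [← heq, ← hx₁, ← hx₂]
    group
  obtain ⟨fix1, van1⟩ := BraidAux.parab_support hk₁ hx₁mem
  obtain ⟨fix2, van2⟩ := BraidAux.parab_support hk₂ hx₂mem
  have hout1 : ∃ i : Fin n, BraidAux.OutB k₁ l₁ i := by
    unfold BraidAux.OutB
    by_cases h : 2 ≤ k₁
    · refine ⟨⟨0, by omega⟩, Or.inl ?_⟩
      show 0 + 1 < _; omega
    · refine ⟨⟨l₁, by omega⟩, Or.inr ?_⟩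
      simp
  have hout2 : ∃ i : Fin n, BraidAux.OutB k₂ l₂ i := by
    unfold BraidAux.OutB
    by_cases h : 2 ≤ k₂
    · refine ⟨⟨0, by omega⟩, Or.inl ?_⟩
      show 0 + 1 < _; omega
    · refine ⟨⟨l₂, by omega⟩, Or.inr ?_⟩
      simp
  obtain ⟨i₁, hi₁⟩ := hout1
  obtain ⟨i₂, hi₂⟩ := hout2
  exact BraidAux.key hn (g * u₁) u₂ x₁ x₂ k i₁ i₂
    (fix1 i₁ hi₁) (fun q => van1 i₁ q (Or.inl hi₁))
    (fix2 i₂ hi₂) (fun q => van2 i₂ q (Or.inl hi₂)) (fun p => van2 p i₂ (Or.inr hi₂))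
    heq'
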